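/- Let n ≥ 3 and W the n × n Wielandt matrix, and define S_k = { u : (W^k) u (n-1) > 0 }. Then the sets S_1, S_2, ..., S_{n^2-3n+2} are pairwise distinct proper subsets of {1,...,n}. -/

import Mathlib

/-- The `n × n` Wielandt matrix: `W i j = 1` iff (`i ≥ 2` and `j = i - 1`) or
(`i = 1` and `j ∈ {n-1, n}`), written here with 0-based indexing via `Fin n`. -/
def wielandt (n : ℕ) : Matrix (Fin n) (Fin n) ℕ := fun i j =>
  if (1 ≤ i.val ∧ j.val + 1 = i.val) ∨ (i.val = 0 ∧ (j.val = n - 2 ∨ j.val = n - 1))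
  then 1 else 0

lemma wielandt_pos_iff {n : ℕ} (u j : Fin n) :
    0 < wielandt n u j ↔
      ((1 ≤ u.val ∧ j.val + 1 = u.val) ∨ (u.val = 0 ∧ (j.val = n - 2 ∨ j.val = n - 1))) := by
  unfold wielandt
  split <;> simp_all

lemma wielandt_step {n : ℕ} (k : ℕ) (u v : Fin n) :
    0 < (wielandt n ^ (k + 1)) u v ↔
      ∃ j : Fin n,
        ((1 ≤ u.val ∧ j.val + 1 = u.val) ∨ (u.val = 0 ∧ (j.val = n - 2 ∨ j.val = n - 1))) ∧
          0 < (wielandt n ^ k) j v := by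
  rw [pow_succ', Matrix.mul_apply]
  constructor
  · intro h
    obtain ⟨j, -, hj⟩ := Finset.exists_ne_zero_of_sum_ne_zero h.ne'
    rw [Nat.mul_ne_zero_iff] at hj
    exact ⟨j, (wielandt_pos_iff u j).1 (Nat.pos_of_ne_zero hj.1), Nat.pos_of_ne_zero hj.2⟩
  · rintro ⟨j, hc, hp⟩
    calc (0:ℕ) < wielandt n u j * (wielandt n ^ k) j v :=
          Nat.mul_pos ((wielandt_pos_iff u j).2 hc) hp
      _ ≤ _ := Finset.single_le_sum (f := fun i => wielandt n u i * (wielandt n ^ k) i v)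
          (fun i _ => Nat.zero_le _) (Finset.mem_univ j)

lemma wielandt_char {n : ℕ} (hn : 3 ≤ n) (k : ℕ) (u : Fin n) :
    0 < (wielandt n ^ k) u ⟨n - 2, Nat.sub_lt (by omega) two_pos⟩ ↔
      (u.val = k + (n - 2) ∨
        ∃ a b c : ℕ, 1 ≤ c ∧ c ≤ 2 ∧ k = u.val + a * (n - 1) + b * n + c) := by
  induction k generalizing u with
  | zero =>
      rw [pow_zero, Matrix.one_apply]
      constructor
      · intro h
        left
        split at h
        · rename_i he
          rw [he]
          show (n - 2 : ℕ) = 0 + (n - 2)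
          omega
        · exact absurd h (lt_irrefl 0)
      · rintro (h | ⟨a, b, c, hc1, hc2, habs⟩)
        · have he : u = ⟨n - 2, by omega⟩ := Fin.ext (by simpa using h)
          rw [he]
          simp
        · exfalso
          have H : ∀ x y : ℕ, ¬ (0 = u.val + x + y + c) := by intro x y hxy; omega
          exact H _ _ habs
  | succ k ih =>
      rw [wielandt_step]
      constructor
      · rintro ⟨j, hcond, hpos⟩
        rw [ih] at hpos
        rcases hcond with ⟨hu1, hju⟩ | ⟨hu0, hj⟩
        · rcases hpos with hd | ⟨a, b, c, hc1, hc2, hk⟩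
          · left; omega
          · right
            refine ⟨a, b, c, hc1, hc2, ?_⟩
            have H : ∀ x y : ℕ, k = j.val + x + y + c → k + 1 = u.val + x + y + c := by
              intro x y h; omega
            exact H _ _ hk
        · rcases hpos with hd | ⟨a, b, c, hc1, hc2, hk⟩
          · right
            rcases hj with hj | hj
            · refine ⟨0, 0, 1, le_refl 1, one_le_two, ?_⟩
              have H : ∀ x y : ℕ, x = 0 → y = 0 → k + 1 = u.val + x + y + 1 := by
                intro x y hx hy; omega
              exact H _ _ (zero_mul _) (zero_mul _)
            · refine ⟨0, 0, 2, by omega, le_refl 2, ?_⟩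
              have H : ∀ x y : ℕ, x = 0 → y = 0 → k + 1 = u.val + x + y + 2 := by
                intro x y hx hy; omega
              exact H _ _ (zero_mul _) (zero_mul _)
          · right
            rcases hj with hj | hj
            · refine ⟨a + 1, b, c, hc1, hc2, ?_⟩
              rw [show (a+1)*(n-1) = a*(n-1)+(n-1) by ring]
              have H : ∀ x y : ℕ, k = j.val + x + y + c →
                  k + 1 = u.val + (x + (n-1)) + y + c := by
                intro x y h; omega
              exact H _ _ hk
            · refine ⟨a, b + 1, c, hc1, hc2, ?_⟩
              rw [show (b+1)*n = b*n+n by ring]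
              have H : ∀ x y : ℕ, k = j.val + x + y + c →
                  k + 1 = u.val + x + (y + n) + c := by
                intro x y h; omega
              exact H _ _ hk
      · rintro (hd | ⟨a, b, c, hc1, hc2, hk⟩)
        · have hlt := u.isLt
          have hu : 1 ≤ u.val := by omega
          refine ⟨⟨u.val - 1, by omega⟩, Or.inl ⟨hu, by show u.val - 1 + 1 = u.val; omega⟩, ?_⟩
          rw [ih]
          left
          show u.val - 1 = k + (n - 2)
          omega
        · have hlt := u.isLt
          by_cases hu : 1 ≤ u.val
          · refine ⟨⟨u.val - 1, by omega⟩, Or.inl ⟨hu, by show u.val - 1 + 1 = u.val; omega⟩, ?_⟩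
            rw [ih]
            right
            refine ⟨a, b, c, hc1, hc2, ?_⟩
            show k = u.val - 1 + a * (n-1) + b * n + c
            have H : ∀ x y : ℕ, k + 1 = u.val + x + y + c → k = u.val - 1 + x + y + c := by
              intro x y h; omega
            exact H _ _ hk
          · have hu0 : u.val = 0 := by omega
            rcases a with _ | a
            · rcases b with _ | b
              · have hk' : k + 1 = c := by
                  have H : ∀ x y : ℕ, x = 0 → y = 0 → k + 1 = u.val + x + y + c → k + 1 = c := by
                    intro x y hx hy h; omega
                  exact H _ _ (zero_mul _) (zero_mul _) hk
                have hk01 : k = 0 ∨ k = 1 := by omega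
                rcases hk01 with rfl | rfl
                · refine ⟨⟨n - 2, by omega⟩, Or.inr ⟨hu0, Or.inl rfl⟩, ?_⟩
                  rw [ih]
                  left
                  show (n - 2 : ℕ) = 0 + (n - 2)
                  omega
                · refine ⟨⟨n - 1, by omega⟩, Or.inr ⟨hu0, Or.inr rfl⟩, ?_⟩
                  rw [ih]
                  left
                  show (n - 1 : ℕ) = 1 + (n - 2)
                  omega
              · refine ⟨⟨n - 1, by omega⟩, Or.inr ⟨hu0, Or.inr rfl⟩, ?_⟩
                rw [ih]
                right
                refine ⟨0, b, c, hc1, hc2, ?_⟩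
                show k = n - 1 + 0 * (n-1) + b * n + c
                have hk2 : k + 1 = u.val + 0 * (n-1) + (b*n + n) + c := by
                  rw [show b*n + n = (b+1)*n by ring]
                  exact hk
                have H : ∀ x y : ℕ, k + 1 = u.val + x + (y + n) + c →
                    k = n - 1 + x + y + c := by
                  intro x y h; omega
                exact H _ _ hk2
            · refine ⟨⟨n - 2, by omega⟩, Or.inr ⟨hu0, Or.inl rfl⟩, ?_⟩
              rw [ih]
              right
              refine ⟨a, b, c, hc1, hc2, ?_⟩
              show k = n - 2 + a * (n-1) + b * n + c
              have hk2 : k + 1 = u.val + (a*(n-1) + (n-1)) + b*n + c := by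
                rw [show a*(n-1) + (n-1) = (a+1)*(n-1) by ring]
                exact hk
              have H : ∀ x y : ℕ, k + 1 = u.val + (x + (n-1)) + y + c →
                  k = n - 2 + x + y + c := by
                intro x y h; omega
              exact H _ _ hk2

lemma wielandt_memF {n : ℕ} (hn : 3 ≤ n) (Q R : ℕ) (hQ : Q ≤ n - 3) (hR : R ≤ n - 2)
    (u : Fin n) :
    0 < (wielandt n ^ (Q * (n - 1) + R + 1)) u ⟨n - 2, Nat.sub_lt (by omega) two_pos⟩ ↔
      ((u.val ≤ R ∧ R ≤ u.val + Q + 1) ∨ (R + (n - 1) ≤ u.val + Q)) := by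
  have hlt := u.isLt
  have hbn : ∀ b : ℕ, b * n = b * (n - 1) + b := by
    intro b
    have h1 : n - 1 + 1 = n := by omega
    calc b * n = b * ((n - 1) + 1) := by rw [h1]
      _ = b * (n - 1) + b := by ring
  rw [wielandt_char hn]
  constructor
  · rintro (hd | ⟨a, b, c, hc1, hc2, hk⟩)
    · have H : ∀ x : ℕ, u.val = x + R + 1 + (n - 2) →
          ((u.val ≤ R ∧ R ≤ u.val + Q + 1) ∨ (R + (n - 1) ≤ u.val + Q)) := by
        intro x h; omega
      exact H _ hd
    · rw [hbn b] at hk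
      rcases Nat.lt_trichotomy (a + b) Q with hlt2 | heq | hgt
      · have h2 : Q * (n - 1) = (a + b) * (n - 1) + (Q - (a + b)) * (n - 1) := by
          rw [← add_mul]
          congr 1
          omega
        have h3 : (n - 1) ≤ (Q - (a + b)) * (n - 1) :=
          Nat.le_mul_of_pos_left _ (by omega)
        have h4 : (a + b) * (n - 1) + (Q - (a + b)) * (n - 1) =
            a * (n - 1) + b * (n - 1) + (Q - (a + b)) * (n - 1) := by ring
        rw [h2, h4] at hk
        have H : ∀ x y z : ℕ, (n - 1) ≤ z →
            x + y + z + R + 1 = u.val + x + (y + b) + c →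
            ((u.val ≤ R ∧ R ≤ u.val + Q + 1) ∨ (R + (n - 1) ≤ u.val + Q)) := by
          intro x y z hz h; omega
        exact H _ _ _ h3 hk
      · subst heq
        have h4 : (a + b) * (n - 1) = a * (n - 1) + b * (n - 1) := by ring
        rw [h4] at hk
        have H : ∀ x y : ℕ, x + y + R + 1 = u.val + x + (y + b) + c →
            ((u.val ≤ R ∧ R ≤ u.val + (a + b) + 1) ∨ (R + (n - 1) ≤ u.val + (a + b))) := by
          intro x y h; omega
        exact H _ _ hk
      · exfalso
        have h2 : (a + b) * (n - 1) = Q * (n - 1) + ((a + b) - Q) * (n - 1) := by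
          rw [← add_mul]
          congr 1
          omega
        have h3 : (n - 1) ≤ ((a + b) - Q) * (n - 1) :=
          Nat.le_mul_of_pos_left _ (by omega)
        have h5 : u.val + a * (n - 1) + (b * (n - 1) + b) + c =
            u.val + ((a + b) * (n - 1)) + b + c := by ring
        rw [h5, h2] at hk
        have H : ∀ x z : ℕ, (n - 1) ≤ z →
            x + R + 1 = u.val + (x + z) + b + c → False := by
          intro x z hz h; omega
        exact H _ _ h3 hk
  · rintro (⟨h1, h2⟩ | hB)
    · right
      obtain ⟨d, rfl⟩ : ∃ d, R = u.val + d := ⟨R - u.val, by omega⟩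
      rcases Nat.lt_or_ge d (Q + 1) with hd | hd
      · obtain ⟨e, rfl⟩ : ∃ e, Q = d + e := ⟨Q - d, by omega⟩
        refine ⟨e, d, 1, le_refl 1, one_le_two, ?_⟩
        rw [show (d + e) * (n - 1) = d * (n - 1) + e * (n - 1) by ring, hbn d]
        have H : ∀ x y : ℕ,
            x + y + (u.val + d) + 1 = u.val + y + (x + d) + 1 := by
          intro x y; omega
        exact H _ _
      · have hd2 : d = Q + 1 := by omega
        subst hd2
        refine ⟨0, Q, 2, by omega, le_refl 2, ?_⟩
        rw [hbn Q]
        have hz : (0 : ℕ) * (n - 1) = 0 := zero_mul _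
        rw [hz]
        have H : ∀ x : ℕ,
            x + (u.val + (Q + 1)) + 1 = u.val + 0 + (x + Q) + 2 := by
          intro x; omega
        exact H _
    · rcases Nat.eq_zero_or_pos Q with rfl | hQpos
      · left
        have H : ∀ x : ℕ, x = 0 → u.val = x + R + 1 + (n - 2) := by
          intro x hx; omega
        exact H _ (zero_mul _)
      · right
        obtain ⟨Q', rfl⟩ : ∃ Q', Q = Q' + 1 := ⟨Q - 1, by omega⟩
        rcases Nat.lt_or_ge (R + (n - 1)) (u.val + Q' + 1) with hg | hg
        · obtain ⟨gm, hgm⟩ : ∃ gm, u.val + Q' = R + (n - 1) + gm :=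
            ⟨u.val + Q' - (R + (n - 1)), by omega⟩
          obtain ⟨β, rfl⟩ : ∃ β, Q' = gm + β := ⟨Q' - gm, by omega⟩
          refine ⟨gm, β, 1, le_refl 1, one_le_two, ?_⟩
          rw [show (gm + β + 1) * (n - 1) = gm * (n - 1) + β * (n - 1) + (n - 1) by ring,
            hbn β]
          have H : ∀ x y : ℕ,
              x + y + (n - 1) + R + 1 = u.val + x + (y + β) + 1 := by
            intro x y; omega
          exact H _ _
        · have he : u.val + Q' + 1 = R + (n - 1) := by omega
          refine ⟨0, Q', 2, by omega, le_refl 2, ?_⟩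
          rw [show (Q' + 1) * (n - 1) = Q' * (n - 1) + (n - 1) by ring, hbn Q']
          have hz : (0 : ℕ) * (n - 1) = 0 := zero_mul _
          rw [hz]
          have H : ∀ x : ℕ, x + (n - 1) + R + 1 = u.val + 0 + (x + Q') + 2 := by
            intro x; omega
          exact H _

/-- The sets `S_1, ..., S_{n^2-3n+2}` (column `n-1` supports of powers of the
Wielandt matrix) are pairwise distinct proper subsets of the full index set. -/
theorem wielandt_S_sets_distinct_proper (n : ℕ) (hn : 3 ≤ n) :
    (∀ p q : ℕ, 1 ≤ p → p < q → q ≤ n ^ 2 - 3 * n + 2 →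
      {u : Fin n | 0 < (wielandt n ^ p) u ⟨n - 2, by omega⟩} ≠
        {u : Fin n | 0 < (wielandt n ^ q) u ⟨n - 2, by omega⟩}) ∧
    (∀ k : ℕ, 1 ≤ k → k ≤ n ^ 2 - 3 * n + 2 →
      {u : Fin n | 0 < (wielandt n ^ k) u ⟨n - 2, by omega⟩} ≠ Set.univ) := by
  have key : ∀ k : ℕ, 1 ≤ k → k ≤ n ^ 2 - 3 * n + 2 →
      ∃ Q R : ℕ, Q ≤ n - 3 ∧ R ≤ n - 2 ∧ k = Q * (n - 1) + R + 1 := by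
    intro k h1 h2
    have hpos : 0 < n - 1 := by omega
    have hdm := Nat.div_add_mod (k - 1) (n - 1)
    have hmod : (k - 1) % (n - 1) < n - 1 := Nat.mod_lt _ hpos
    have hval : (n - 1) * (n - 2) = n ^ 2 - 3 * n + 2 := by
      obtain ⟨m, rfl⟩ : ∃ m, n = m + 3 := ⟨n - 3, by omega⟩
      have e1 : (m + 3) - 1 = m + 2 := by omega
      have e2 : (m + 3) - 2 = m + 1 := by omega
      have e3 : (m + 2) * (m + 1) = m * m + 3 * m + 2 := by ring
      have e4 : (m + 3) ^ 2 = m * m + 6 * m + 9 := by ring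
      rw [e1, e2, e3, e4]
      have H : ∀ x : ℕ, x + 3 * m + 2 = x + 6 * m + 9 - 3 * (m + 3) + 2 := by
        intro x; omega
      exact H _
    refine ⟨(k - 1) / (n - 1), (k - 1) % (n - 1), ?_, by omega, ?_⟩
    · by_contra hq
      push_neg at hq
      have h3 : (n - 1) * (n - 2) ≤ (n - 1) * ((k - 1) / (n - 1)) :=
        Nat.mul_le_mul_left _ (by omega)
      have h2' : k ≤ (n - 1) * (n - 2) := by rw [hval]; exact h2
      have H : ∀ x y r : ℕ, x + r = k - 1 → y ≤ x → k ≤ y → False := by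
        intro x y r hx hy hk'; omega
      exact H _ _ _ hdm h3 h2'
    · have e : (k - 1) / (n - 1) * (n - 1) = (n - 1) * ((k - 1) / (n - 1)) :=
        Nat.mul_comm _ _
      rw [e]
      have H : ∀ x : ℕ, x + (k - 1) % (n - 1) = k - 1 → k = x + (k - 1) % (n - 1) + 1 := by
        intro x hx; omega
      exact H _ hdm
  constructor
  · intro p q hp hpq hq hset
    obtain ⟨Qp, Rp, hQp, hRp, hkp⟩ := key p hp (le_trans hpq.le hq)
    obtain ⟨Qq, Rq, hQq, hRq, hkq⟩ := key q (by omega) hq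
    rw [Set.ext_iff] at hset
    simp only [Set.mem_setOf_eq] at hset
    have hmem' : ∀ w : ℕ, w < n →
        (((w ≤ Rp ∧ Rp ≤ w + Qp + 1) ∨ (Rp + (n - 1) ≤ w + Qp)) ↔
          ((w ≤ Rq ∧ Rq ≤ w + Qq + 1) ∨ (Rq + (n - 1) ≤ w + Qq))) := by
      intro w hw
      have h1 := wielandt_memF hn Qp Rp hQp hRp ⟨w, hw⟩
      have h2 := wielandt_memF hn Qq Rq hQq hRq ⟨w, hw⟩
      rw [← hkp] at h1
      rw [← hkq] at h2
      exact h1.symm.trans ((hset ⟨w, hw⟩).trans h2)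
    have hReq : Rp = Rq := by
      have a1 : (Rp ≤ Rq ∧ Rq ≤ Rp + Qq + 1) ∨ (Rq + (n - 1) ≤ Rp + Qq) :=
        (hmem' Rp (by omega)).1 (Or.inl ⟨le_refl _, by omega⟩)
      have a2 : ((Rp + 1 ≤ Rp ∧ Rp ≤ Rp + 1 + Qp + 1) ∨ (Rp + (n - 1) ≤ Rp + 1 + Qp)) ∨
          ¬ ((Rp + 1 ≤ Rq ∧ Rq ≤ Rp + 1 + Qq + 1) ∨ (Rq + (n - 1) ≤ Rp + 1 + Qq)) := by
        by_cases hc : ((Rp + 1 ≤ Rq ∧ Rq ≤ Rp + 1 + Qq + 1) ∨ (Rq + (n - 1) ≤ Rp + 1 + Qq))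
        · exact Or.inl ((hmem' (Rp + 1) (by omega)).2 hc)
        · exact Or.inr hc
      omega
    have hQeq : Qp = Qq := by
      rcases Nat.lt_trichotomy Qp Qq with hlt | heq | hgt
      · exfalso
        rcases le_or_gt Rp Qq with hRQ | hRQ
        · have a2 := (hmem' (Rp + (n - 1) - Qq) (by omega)).2 (Or.inr (by omega))
          omega
        · have a2 := (hmem' (Rp - Qp - 2) (by omega)).2 (Or.inl ⟨by omega, by omega⟩)
          omega
      · exact heq
      · exfalso
        rcases le_or_gt Rp Qp with hRQ | hRQ
        · have a2 := (hmem' (Rp + (n - 1) - Qp) (by omega)).1 (Or.inr (by omega))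
          omega
        · have a2 := (hmem' (Rp - Qq - 2) (by omega)).1 (Or.inl ⟨by omega, by omega⟩)
          omega
    rw [hkp, hkq, hQeq, hReq] at hpq
    exact lt_irrefl _ hpq
  · intro k hk1 hk2 hset
    obtain ⟨Q, R, hQ, hR, hkey⟩ := key k hk1 hk2
    have hu : R + 1 < n := by omega
    have hmem := wielandt_memF hn Q R hQ hR ⟨R + 1, hu⟩
    rw [← hkey] at hmem
    rw [Set.eq_univ_iff_forall] at hset
    have a2 : (R + 1 ≤ R ∧ R ≤ R + 1 + Q + 1) ∨ (R + (n - 1) ≤ R + 1 + Q) :=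
      hmem.1 (hset ⟨R + 1, hu⟩)
    omega
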